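/- Let α > 1. Then there is a constant C, depending only on α, such that ‖x^{−2} A_α(A_α^* φ)‖_{L²_x} ≤ C ‖φ‖_{L²_x} for every φ ∈ L²_x. -/

import Mathlib

open MeasureTheory Set
open scoped ENNReal

/-- The integral operator `(A_α φ)(x) = x^{−α} ∫₀ˣ y^α φ(y) dy`. -/
noncomputable def Aa (α : ℝ) (φ : ℝ → ℝ) : ℝ → ℝ :=
  fun x => x ^ (-α) * ∫ y in Ioo (0:ℝ) x, y ^ α * φ y

/-- The integral operator `(A_α^* φ)(x) = x^{α−1} ∫ₓ¹ y^{1−α} φ(y) dy`. -/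
noncomputable def Astar (α : ℝ) (φ : ℝ → ℝ) : ℝ → ℝ :=
  fun x => x ^ (α - 1) * ∫ y in Ioo x (1:ℝ), y ^ (1 - α) * φ y

/-- The twisted derivative `D_{x,α} φ = φ' + (α/x) φ`. -/
noncomputable def Dtw (α : ℝ) (φ : ℝ → ℝ) : ℝ → ℝ :=
  fun x => deriv φ x + (α / x) * φ x

/-- The formal adjoint `D*_{x,α} φ = −φ' + ((α−1)/x) φ`. -/
noncomputable def Dstar (α : ℝ) (φ : ℝ → ℝ) : ℝ → ℝ :=
  fun x => -deriv φ x + ((α - 1) / x) * φ x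

/-- Membership in `L²_x = L²((0,1), x dx)`. -/
def MemL2x (φ : ℝ → ℝ) : Prop := IntegrableOn (fun x => φ x ^ 2 * x) (Ioo (0:ℝ) 1)

/-- The `L²_x` norm, `‖φ‖ = (∫₀¹ φ(x)² x dx)^{1/2}`. -/
noncomputable def L2xNorm (φ : ℝ → ℝ) : ℝ := Real.sqrt (∫ x in Ioo (0:ℝ) 1, φ x ^ 2 * x)

/-- The `L²_x` norm as an extended nonnegative real, `(∫₀¹ φ(x)² x dx)^{1/2}`. -/
noncomputable def eL2x (φ : ℝ → ℝ) : ℝ≥0∞ :=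
  (∫⁻ x in Ioo (0:ℝ) 1, ENNReal.ofReal (φ x ^ 2 * x)) ^ (1/2 : ℝ)

open intervalIntegral
open scoped Interval

lemma lint_rpow_Ioo (p : ℝ) (hp : -1 < p) (w : ℝ) (hw : 0 ≤ w) :
    ∫⁻ y in Ioo (0:ℝ) w, ENNReal.ofReal (y ^ p) = ENNReal.ofReal (w ^ (p+1) / (p+1)) := by
  rw [Measure.restrict_congr_set Ioo_ae_eq_Ioc,
    ← MeasureTheory.ofReal_integral_eq_lintegral_ofReal]
  · congr 1
    rw [← intervalIntegral.integral_of_le hw, integral_rpow (Or.inl hp)]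
    rw [Real.zero_rpow (by linarith : p + 1 ≠ 0)]
    ring
  · exact (intervalIntegrable_iff_integrableOn_Ioc_of_le hw).mp (intervalIntegrable_rpow' hp)
  · filter_upwards [self_mem_ae_restrict measurableSet_Ioc] with y hy
    exact Real.rpow_nonneg hy.1.le p

lemma lint_rpow_Ioo_one (p : ℝ) (hp : p < -1) {x : ℝ} (hx : 0 < x) (hx1 : x ≤ 1) :
    ∫⁻ y in Ioo x (1:ℝ), ENNReal.ofReal (y ^ p) ≤ ENNReal.ofReal (x ^ (p+1) / (-(p+1))) := by
  have hnot : (0:ℝ) ∉ [[x, 1]] := by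
    rw [Set.uIcc_of_le hx1]; rintro ⟨h0, -⟩; exact absurd h0 (not_le.mpr hx)
  rw [Measure.restrict_congr_set Ioo_ae_eq_Ioc,
    ← MeasureTheory.ofReal_integral_eq_lintegral_ofReal]
  · apply ENNReal.ofReal_le_ofReal
    rw [← intervalIntegral.integral_of_le hx1, integral_rpow]
    · have h1 : (1:ℝ) ^ (p+1) = 1 := Real.one_rpow _
      have hq : (0:ℝ) < -(p+1) := by linarith
      have key : (1 - x^(p+1))/(p+1) = (x^(p+1) - 1)/(-(p+1)) := by
        rw [div_eq_div_iff (by linarith) hq.ne']; ring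
      rw [h1, key]
      gcongr
      linarith
    · exact Or.inr ⟨by intro h; rw [h] at hp; norm_num at hp, hnot⟩
  · exact (intervalIntegrable_iff_integrableOn_Ioc_of_le hx1).mp
      (intervalIntegrable_rpow (Or.inr hnot))
  · filter_upwards [self_mem_ae_restrict measurableSet_Ioc] with y hy
    exact Real.rpow_nonneg (hx.trans hy.1).le p


lemma ind_mul (s B : Set ℝ) (hs : MeasurableSet s) (w : ℝ → ℝ≥0∞) (hB : MeasurableSet B) :
    ∫⁻ z in B, s.indicator 1 z * w z = ∫⁻ z in s ∩ B, w z := by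
  have : ∀ z, s.indicator 1 z * w z = s.indicator w z := by
    intro z
    by_cases h : z ∈ s <;> simp [Set.indicator_of_mem, Set.indicator_of_notMem, h]
  simp_rw [this]
  rw [lintegral_indicator hs, Measure.restrict_restrict hs]

lemma swap_main (u w : ℝ → ℝ≥0∞) (hu : Measurable u) (hw : Measurable w)
    (S : Set (ℝ × ℝ)) (hS : MeasurableSet S) (A B : Set ℝ)
    (hA : MeasurableSet A) (hB : MeasurableSet B)
    (hut : ∀ x, u x ≠ ⊤) (hwt : ∀ z, w z ≠ ⊤) :
    ∫⁻ x in A, u x * ∫⁻ z in B, S.indicator 1 (x, z) * w z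
      = ∫⁻ z in B, w z * ∫⁻ x in A, S.indicator 1 (x, z) * u x := by
  have hf : Measurable (Function.uncurry fun x z => u x * (S.indicator 1 (x, z) * w z)) := by
    apply Measurable.mul
    · exact hu.comp measurable_fst
    · apply Measurable.mul
      · exact (measurable_one.indicator hS).comp measurable_id
      · exact hw.comp measurable_snd
  calc ∫⁻ x in A, u x * ∫⁻ z in B, S.indicator 1 (x, z) * w z
      = ∫⁻ x in A, ∫⁻ z in B, u x * (S.indicator 1 (x, z) * w z) := by
        refine lintegral_congr fun x => ?_
        rw [lintegral_const_mul' (u x) _ (hut x)]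
    _ = ∫⁻ z in B, ∫⁻ x in A, u x * (S.indicator 1 (x, z) * w z) := by
        exact lintegral_lintegral_swap hf.aemeasurable
    _ = ∫⁻ z in B, w z * ∫⁻ x in A, S.indicator 1 (x, z) * u x := by
        refine lintegral_congr fun z => ?_
        rw [← lintegral_const_mul' (w z) _ (hwt z)]
        refine lintegral_congr fun x => ?_
        by_cases h : (x, z) ∈ S <;>
          simp [Set.indicator_of_mem, Set.indicator_of_notMem, h, mul_comm, mul_left_comm]

lemma swap1 {x : ℝ} (hx : x ∈ Ioo (0:ℝ) 1) (k m : ℝ → ℝ≥0∞)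
    (hk : Measurable k) (hm : Measurable m)
    (hkt : ∀ y, k y ≠ ⊤) (hmt : ∀ z, m z ≠ ⊤) :
    ∫⁻ y in Ioo (0:ℝ) x, k y * ∫⁻ z in Ioo y 1, m z
      = ∫⁻ z in Ioo (0:ℝ) 1, m z * ∫⁻ y in Ioo 0 (min x z), k y := by
  have hS : MeasurableSet {p : ℝ × ℝ | p.1 < p.2} :=
    measurableSet_lt measurable_fst measurable_snd
  have key := swap_main k m hk hm {p : ℝ × ℝ | p.1 < p.2} hS (Ioo 0 x) (Ioo 0 1)
    measurableSet_Ioo measurableSet_Ioo hkt hmt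
  have L : ∫⁻ y in Ioo (0:ℝ) x, k y * ∫⁻ z in Ioo (0:ℝ) 1,
      ({p : ℝ × ℝ | p.1 < p.2}).indicator 1 (y, z) * m z
      = ∫⁻ y in Ioo (0:ℝ) x, k y * ∫⁻ z in Ioo y 1, m z := by
    refine setLIntegral_congr_fun_ae measurableSet_Ioo (ae_of_all _ fun y hy => ?_)
    congr 1
    have : ∀ z : ℝ, ({p : ℝ × ℝ | p.1 < p.2}).indicator 1 (y, z)
        = (Ioi y).indicator (1 : ℝ → ℝ≥0∞) z := by
      intro z
      by_cases h : y < z <;>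
        simp [Set.indicator_of_mem, Set.indicator_of_notMem, h, Set.mem_setOf_eq]
    simp_rw [this]
    rw [ind_mul _ _ measurableSet_Ioi _ measurableSet_Ioo]
    have hset : Ioi y ∩ Ioo (0:ℝ) 1 = Ioo y 1 := by
      ext z
      simp only [Set.mem_inter_iff, Set.mem_Ioi, Set.mem_Ioo]
      constructor
      · rintro ⟨h1, h2, h3⟩; exact ⟨h1, h3⟩
      · rintro ⟨h1, h2⟩; exact ⟨h1, lt_trans hy.1 h1, h2⟩
    rw [hset]
  have R : ∫⁻ z in Ioo (0:ℝ) 1, m z * ∫⁻ y in Ioo (0:ℝ) x,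
      ({p : ℝ × ℝ | p.1 < p.2}).indicator 1 (y, z) * k y
      = ∫⁻ z in Ioo (0:ℝ) 1, m z * ∫⁻ y in Ioo 0 (min x z), k y := by
    refine setLIntegral_congr_fun_ae measurableSet_Ioo (ae_of_all _ fun z hz => ?_)
    congr 1
    have : ∀ y : ℝ, ({p : ℝ × ℝ | p.1 < p.2}).indicator 1 (y, z)
        = (Iio z).indicator (1 : ℝ → ℝ≥0∞) y := by
      intro y
      by_cases h : y < z <;>
        simp [Set.indicator_of_mem, Set.indicator_of_notMem, h, Set.mem_setOf_eq]
    simp_rw [this]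
    rw [ind_mul _ _ measurableSet_Iio _ measurableSet_Ioo]
    have hset : Iio z ∩ Ioo (0:ℝ) x = Ioo 0 (min x z) := by
      ext y
      simp only [Set.mem_inter_iff, Set.mem_Iio, Set.mem_Ioo, lt_min_iff]
      tauto
    rw [hset]
  rw [← L, key, R]

lemma swap2 (u w : ℝ → ℝ≥0∞) (hu : Measurable u) (hw : Measurable w)
    (hut : ∀ y, u y ≠ ⊤) (hwt : ∀ z, w z ≠ ⊤) :
    ∫⁻ x in Ioo (0:ℝ) 1, u x * ∫⁻ z in Ioo 0 x, w z
      = ∫⁻ z in Ioo (0:ℝ) 1, w z * ∫⁻ x in Ioo z 1, u x := by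
  have hS : MeasurableSet {p : ℝ × ℝ | p.2 < p.1} :=
    measurableSet_lt measurable_snd measurable_fst
  have key := swap_main u w hu hw {p : ℝ × ℝ | p.2 < p.1} hS (Ioo 0 1) (Ioo 0 1)
    measurableSet_Ioo measurableSet_Ioo hut hwt
  have L : ∫⁻ x in Ioo (0:ℝ) 1, u x * ∫⁻ z in Ioo (0:ℝ) 1,
      ({p : ℝ × ℝ | p.2 < p.1}).indicator 1 (x, z) * w z
      = ∫⁻ x in Ioo (0:ℝ) 1, u x * ∫⁻ z in Ioo 0 x, w z := by
    refine setLIntegral_congr_fun_ae measurableSet_Ioo (ae_of_all _ fun x hx => ?_)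
    congr 1
    have : ∀ z : ℝ, ({p : ℝ × ℝ | p.2 < p.1}).indicator 1 (x, z)
        = (Iio x).indicator (1 : ℝ → ℝ≥0∞) z := by
      intro z
      by_cases h : z < x <;>
        simp [Set.indicator_of_mem, Set.indicator_of_notMem, h, Set.mem_setOf_eq]
    simp_rw [this]
    rw [ind_mul _ _ measurableSet_Iio _ measurableSet_Ioo]
    have hset : Iio x ∩ Ioo (0:ℝ) 1 = Ioo 0 x := by
      ext z
      simp only [Set.mem_inter_iff, Set.mem_Iio, Set.mem_Ioo]
      constructor
      · rintro ⟨h1, h2, h3⟩; exact ⟨h2, h1⟩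
      · rintro ⟨h1, h2⟩; exact ⟨h2, h1, lt_trans h2 hx.2⟩
    rw [hset]
  have R : ∫⁻ z in Ioo (0:ℝ) 1, w z * ∫⁻ x in Ioo (0:ℝ) 1,
      ({p : ℝ × ℝ | p.2 < p.1}).indicator 1 (x, z) * u x
      = ∫⁻ z in Ioo (0:ℝ) 1, w z * ∫⁻ x in Ioo z 1, u x := by
    refine setLIntegral_congr_fun_ae measurableSet_Ioo (ae_of_all _ fun z hz => ?_)
    congr 1
    have : ∀ x : ℝ, ({p : ℝ × ℝ | p.2 < p.1}).indicator 1 (x, z)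
        = (Ioi z).indicator (1 : ℝ → ℝ≥0∞) x := by
      intro x
      by_cases h : z < x <;>
        simp [Set.indicator_of_mem, Set.indicator_of_notMem, h, Set.mem_setOf_eq]
    simp_rw [this]
    rw [ind_mul _ _ measurableSet_Ioi _ measurableSet_Ioo]
    have hset : Ioi z ∩ Ioo (0:ℝ) 1 = Ioo z 1 := by
      ext x
      simp only [Set.mem_inter_iff, Set.mem_Ioi, Set.mem_Ioo]
      constructor
      · rintro ⟨h1, h2, h3⟩; exact ⟨h1, h3⟩
      · rintro ⟨h1, h2⟩; exact ⟨h1, lt_trans hz.1 h1, h2⟩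
    rw [hset]
  rw [← L, key, R]

lemma swap3 (u w : ℝ → ℝ≥0∞) (hu : Measurable u) (hw : Measurable w)
    (hut : ∀ y, u y ≠ ⊤) (hwt : ∀ z, w z ≠ ⊤) :
    ∫⁻ x in Ioo (0:ℝ) 1, u x * ∫⁻ z in Ico x 1, w z
      = ∫⁻ z in Ioo (0:ℝ) 1, w z * ∫⁻ x in Ioc 0 z, u x := by
  have hS : MeasurableSet {p : ℝ × ℝ | p.1 ≤ p.2} :=
    measurableSet_le measurable_fst measurable_snd
  have key := swap_main u w hu hw {p : ℝ × ℝ | p.1 ≤ p.2} hS (Ioo 0 1) (Ioo 0 1)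
    measurableSet_Ioo measurableSet_Ioo hut hwt
  have L : ∫⁻ x in Ioo (0:ℝ) 1, u x * ∫⁻ z in Ioo (0:ℝ) 1,
      ({p : ℝ × ℝ | p.1 ≤ p.2}).indicator 1 (x, z) * w z
      = ∫⁻ x in Ioo (0:ℝ) 1, u x * ∫⁻ z in Ico x 1, w z := by
    refine setLIntegral_congr_fun_ae measurableSet_Ioo (ae_of_all _ fun x hx => ?_)
    congr 1
    have : ∀ z : ℝ, ({p : ℝ × ℝ | p.1 ≤ p.2}).indicator 1 (x, z)
        = (Ici x).indicator (1 : ℝ → ℝ≥0∞) z := by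
      intro z
      by_cases h : x ≤ z <;>
        simp [Set.indicator_of_mem, Set.indicator_of_notMem, h, Set.mem_setOf_eq]
    simp_rw [this]
    rw [ind_mul _ _ measurableSet_Ici _ measurableSet_Ioo]
    have hset : Ici x ∩ Ioo (0:ℝ) 1 = Ico x 1 := by
      ext z
      simp only [Set.mem_inter_iff, Set.mem_Ici, Set.mem_Ioo, Set.mem_Ico]
      constructor
      · rintro ⟨h1, h2, h3⟩; exact ⟨h1, h3⟩
      · rintro ⟨h1, h2⟩; exact ⟨h1, lt_of_lt_of_le hx.1 h1, h2⟩
    rw [hset]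
  have R : ∫⁻ z in Ioo (0:ℝ) 1, w z * ∫⁻ x in Ioo (0:ℝ) 1,
      ({p : ℝ × ℝ | p.1 ≤ p.2}).indicator 1 (x, z) * u x
      = ∫⁻ z in Ioo (0:ℝ) 1, w z * ∫⁻ x in Ioc 0 z, u x := by
    refine setLIntegral_congr_fun_ae measurableSet_Ioo (ae_of_all _ fun z hz => ?_)
    congr 1
    have : ∀ x : ℝ, ({p : ℝ × ℝ | p.1 ≤ p.2}).indicator 1 (x, z)
        = (Iic z).indicator (1 : ℝ → ℝ≥0∞) x := by
      intro x
      by_cases h : x ≤ z <;>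
        simp [Set.indicator_of_mem, Set.indicator_of_notMem, h, Set.mem_setOf_eq]
    simp_rw [this]
    rw [ind_mul _ _ measurableSet_Iic _ measurableSet_Ioo]
    have hset : Iic z ∩ Ioo (0:ℝ) 1 = Ioc 0 z := by
      ext x
      simp only [Set.mem_inter_iff, Set.mem_Iic, Set.mem_Ioo, Set.mem_Ioc]
      constructor
      · rintro ⟨h1, h2, h3⟩; exact ⟨h2, h1⟩
      · rintro ⟨h1, h2⟩; exact ⟨h2, h1, lt_of_le_of_lt h2 hz.2⟩
    rw [hset]
  rw [← L, key, R]

lemma meas_P (p : ℝ) : Measurable fun x : ℝ => ENNReal.ofReal (x ^ p) := by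
  measurability

lemma sq3 (a b : ℝ≥0∞) : (a + b) ^ 2 ≤ 3 * (a ^ 2 + b ^ 2) := by
  have hab : a * b ≤ a ^ 2 + b ^ 2 := by
    rcases le_total a b with h | h
    · calc a * b ≤ b * b := mul_le_mul_left h b
        _ = b ^ 2 := (sq b).symm
        _ ≤ a ^ 2 + b ^ 2 := le_add_self
    · calc a * b ≤ a * a := mul_le_mul_right h a
        _ = a ^ 2 := (sq a).symm
        _ ≤ a ^ 2 + b ^ 2 := le_self_add
  calc (a + b) ^ 2 = a ^ 2 + 2 * (a * b) + b ^ 2 := by ring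
    _ ≤ a ^ 2 + 2 * (a ^ 2 + b ^ 2) + b ^ 2 := by gcongr
    _ ≤ 3 * (a ^ 2 + b ^ 2) := by
        rw [show (3 : ℝ≥0∞) = 1 + 2 by norm_num]; ring_nf; exact le_refl _

lemma step0 (α : ℝ) (hα : 1 < α) (φ : ℝ → ℝ) {x : ℝ} (hx : x ∈ Ioo (0:ℝ) 1) :
    ENNReal.ofReal |Aa α (Astar α φ) x / x ^ 2|
      ≤ ENNReal.ofReal (x ^ (-α-2)) *
        ∫⁻ y in Ioo (0:ℝ) x, ENNReal.ofReal (y ^ (2*α-1)) *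
          ∫⁻ z in Ioo y 1, ENNReal.ofReal (z ^ (1-α)) * ENNReal.ofReal |φ z| := by
  have hx0 : (0:ℝ) < x := hx.1
  have e1 : Aa α (Astar α φ) x / x ^ 2
      = x ^ (-α-2) * ∫ y in Ioo (0:ℝ) x, y ^ α * Astar α φ y := by
    rw [Aa, show (-α-2 : ℝ) = -α - (2:ℕ) by push_cast; ring, Real.rpow_sub hx0,
      Real.rpow_natCast]
    ring
  rw [e1, abs_mul, abs_of_pos (Real.rpow_pos_of_pos hx0 _),
    ENNReal.ofReal_mul (Real.rpow_nonneg hx0.le _)]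
  gcongr
  calc ENNReal.ofReal |∫ y in Ioo (0:ℝ) x, y ^ α * Astar α φ y|
      = (‖∫ y in Ioo (0:ℝ) x, y ^ α * Astar α φ y‖ₑ : ℝ≥0∞) :=
        (Real.enorm_eq_ofReal_abs _).symm
    _ ≤ ∫⁻ y in Ioo (0:ℝ) x, ‖y ^ α * Astar α φ y‖ₑ :=
        enorm_integral_le_lintegral_enorm _
    _ ≤ ∫⁻ y in Ioo (0:ℝ) x, ENNReal.ofReal (y ^ (2*α-1)) *
          ∫⁻ z in Ioo y 1, ENNReal.ofReal (z ^ (1-α)) * ENNReal.ofReal |φ z| := by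
        refine lintegral_mono_ae ?_
        filter_upwards [self_mem_ae_restrict measurableSet_Ioo] with y hy
        have hy0 : (0:ℝ) < y := hy.1
        rw [Real.enorm_eq_ofReal_abs, abs_mul, abs_of_pos (Real.rpow_pos_of_pos hy0 _),
          ENNReal.ofReal_mul (Real.rpow_nonneg hy0.le _)]
        have hpsi : ENNReal.ofReal |Astar α φ y| ≤ ENNReal.ofReal (y ^ (α-1)) *
            ∫⁻ z in Ioo y 1, ENNReal.ofReal (z ^ (1-α)) * ENNReal.ofReal |φ z| := by
          rw [Astar, abs_mul, abs_of_pos (Real.rpow_pos_of_pos hy0 _),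
            ENNReal.ofReal_mul (Real.rpow_nonneg hy0.le _)]
          gcongr
          calc ENNReal.ofReal |∫ z in Ioo y (1:ℝ), z ^ (1-α) * φ z|
              = (‖∫ z in Ioo y (1:ℝ), z ^ (1-α) * φ z‖ₑ : ℝ≥0∞) :=
                (Real.enorm_eq_ofReal_abs _).symm
            _ ≤ ∫⁻ z in Ioo y (1:ℝ), ‖z ^ (1-α) * φ z‖ₑ :=
                enorm_integral_le_lintegral_enorm _
            _ = ∫⁻ z in Ioo y (1:ℝ), ENNReal.ofReal (z ^ (1-α)) * ENNReal.ofReal |φ z| := by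
                refine setLIntegral_congr_fun_ae measurableSet_Ioo (ae_of_all _ fun z hz => ?_)
                have hz0 : (0:ℝ) < z := lt_trans hy0 hz.1
                rw [Real.enorm_eq_ofReal_abs, abs_mul,
                  abs_of_pos (Real.rpow_pos_of_pos hz0 _),
                  ENNReal.ofReal_mul (Real.rpow_nonneg hz0.le _)]
        calc ENNReal.ofReal (y ^ α) * ENNReal.ofReal |Astar α φ y|
            ≤ ENNReal.ofReal (y ^ α) * (ENNReal.ofReal (y ^ (α-1)) *
              ∫⁻ z in Ioo y 1, ENNReal.ofReal (z ^ (1-α)) * ENNReal.ofReal |φ z|) :=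
              mul_le_mul_right hpsi _
          _ = ENNReal.ofReal (y ^ (2*α-1)) *
              ∫⁻ z in Ioo y 1, ENNReal.ofReal (z ^ (1-α)) * ENNReal.ofReal |φ z| := by
              rw [← mul_assoc, ← ENNReal.ofReal_mul (Real.rpow_nonneg hy0.le _),
                ← Real.rpow_add hy0, show α + (α - 1) = 2*α - 1 by ring]

lemma conj22 : Real.HolderConjugate 2 2 := Real.HolderConjugate.two_two

-- Cauchy–Schwarz step for S1
lemma claim2 (α : ℝ) (hα : 1 < α) (Φ : ℝ → ℝ≥0∞) (hΦ : Measurable Φ)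
    (hΦt : ∀ z, Φ z ≠ ⊤) :
    ∫⁻ x in Ioo (0:ℝ) 1,
        (ENNReal.ofReal (x ^ (-α-2)) * ∫⁻ z in Ioo 0 x, ENNReal.ofReal (z ^ (α+1)) * Φ z) ^ (2:ℕ)
          * ENNReal.ofReal x
      ≤ ENNReal.ofReal ((1/(α+1))^2) * ∫⁻ z in Ioo (0:ℝ) 1, ENNReal.ofReal z * Φ z ^ (2:ℝ) := by
  have hc1 : (0:ℝ) ≤ 1/(α+1) := by positivity
  set w : ℝ → ℝ≥0∞ := fun z => ENNReal.ofReal (z ^ (α+2)) * Φ z ^ (2:ℝ) with hw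
  have hwm : Measurable w := (meas_P _).mul (hΦ.pow_const _)
  have hwt : ∀ z, w z ≠ ⊤ :=
    fun z => ENNReal.mul_ne_top ENNReal.ofReal_ne_top
      (ENNReal.rpow_lt_top_of_nonneg (by norm_num) (hΦt z)).ne
  have pointwise : ∀ x ∈ Ioo (0:ℝ) 1,
      (ENNReal.ofReal (x ^ (-α-2)) * ∫⁻ z in Ioo 0 x, ENNReal.ofReal (z ^ (α+1)) * Φ z) ^ (2:ℕ)
        * ENNReal.ofReal x
      ≤ ENNReal.ofReal (1/(α+1)) *
          (ENNReal.ofReal (x ^ (-α-2)) * ∫⁻ z in Ioo 0 x, w z) := by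
    intro x hx
    have hx0 : (0:ℝ) < x := hx.1
    set f : ℝ → ℝ≥0∞ := fun z => ENNReal.ofReal (z ^ (α/2)) with hf
    set g : ℝ → ℝ≥0∞ := fun z => ENNReal.ofReal (z ^ ((α+2)/2)) * Φ z with hg
    have hfg : ∫⁻ z in Ioo (0:ℝ) x, ENNReal.ofReal (z ^ (α+1)) * Φ z
        = ∫⁻ z in Ioo (0:ℝ) x, (f * g) z := by
      refine setLIntegral_congr_fun_ae measurableSet_Ioo (ae_of_all _ fun z hz => ?_)
      simp only [hf, hg, Pi.mul_apply]
      rw [← mul_assoc, ← ENNReal.ofReal_mul (Real.rpow_nonneg hz.1.le _),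
        ← Real.rpow_add hz.1, show α/2 + (α+2)/2 = α + 1 by ring]
    have CS := ENNReal.lintegral_mul_le_Lp_mul_Lq (volume.restrict (Ioo (0:ℝ) x)) conj22
      ((meas_P (α/2)).aemeasurable) (((meas_P ((α+2)/2)).mul hΦ).aemeasurable)
    have hf2 : ∫⁻ z in Ioo (0:ℝ) x, f z ^ (2:ℝ) = ENNReal.ofReal (x ^ (α+1) / (α+1)) := by
      have : ∫⁻ z in Ioo (0:ℝ) x, f z ^ (2:ℝ) = ∫⁻ z in Ioo (0:ℝ) x, ENNReal.ofReal (z ^ α) := by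
        refine setLIntegral_congr_fun_ae measurableSet_Ioo (ae_of_all _ fun z hz => ?_)
        rw [hf, ENNReal.ofReal_rpow_of_nonneg (Real.rpow_nonneg hz.1.le _) (by norm_num),
          ← Real.rpow_mul hz.1.le, show α/2 * 2 = α by ring]
      rw [this]
      have := lint_rpow_Ioo α (by linarith) x hx0.le
      rwa [show α + 1 = α + 1 by ring] at this
    have hg2 : ∫⁻ z in Ioo (0:ℝ) x, g z ^ (2:ℝ) = ∫⁻ z in Ioo (0:ℝ) x, w z := by
      refine setLIntegral_congr_fun_ae measurableSet_Ioo (ae_of_all _ fun z hz => ?_)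
      rw [hg, hw, ENNReal.mul_rpow_of_nonneg _ _ (by norm_num : (0:ℝ) ≤ 2),
        ENNReal.ofReal_rpow_of_nonneg (Real.rpow_nonneg hz.1.le _) (by norm_num),
        ← Real.rpow_mul hz.1.le, show (α+2)/2 * 2 = α + 2 by ring]
    rw [hfg] at *
    have sqI : (∫⁻ z in Ioo (0:ℝ) x, (f * g) z) ^ (2:ℕ)
        ≤ ENNReal.ofReal (x ^ (α+1) / (α+1)) * ∫⁻ z in Ioo (0:ℝ) x, w z := by
      calc (∫⁻ z in Ioo (0:ℝ) x, (f * g) z) ^ (2:ℕ)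
          ≤ ((∫⁻ z in Ioo (0:ℝ) x, f z ^ (2:ℝ)) ^ (1/(2:ℝ)) *
             (∫⁻ z in Ioo (0:ℝ) x, g z ^ (2:ℝ)) ^ (1/(2:ℝ))) ^ (2:ℕ) := pow_le_pow_left' CS 2
        _ = (∫⁻ z in Ioo (0:ℝ) x, f z ^ (2:ℝ)) * ∫⁻ z in Ioo (0:ℝ) x, g z ^ (2:ℝ) := by
            rw [mul_pow, ← ENNReal.rpow_natCast (_ ^ (1/(2:ℝ))) 2,
              ← ENNReal.rpow_natCast (_ ^ (1/(2:ℝ))) 2, ← ENNReal.rpow_mul, ← ENNReal.rpow_mul]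
            norm_num
        _ = ENNReal.ofReal (x ^ (α+1) / (α+1)) * ∫⁻ z in Ioo (0:ℝ) x, w z := by
            rw [hf2, hg2]
    calc (ENNReal.ofReal (x ^ (-α-2)) * ∫⁻ z in Ioo (0:ℝ) x, (f*g) z) ^ (2:ℕ)
          * ENNReal.ofReal x
        = ENNReal.ofReal (x ^ (-α-2)) ^ (2:ℕ) * ((∫⁻ z in Ioo (0:ℝ) x, (f*g) z) ^ (2:ℕ))
          * ENNReal.ofReal x := by ring
      _ ≤ ENNReal.ofReal (x ^ (-α-2)) ^ (2:ℕ) *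
            (ENNReal.ofReal (x ^ (α+1) / (α+1)) * ∫⁻ z in Ioo (0:ℝ) x, w z)
          * ENNReal.ofReal x := by gcongr
      _ = (ENNReal.ofReal (x ^ (-α-2)) ^ (2:ℕ) * ENNReal.ofReal (x ^ (α+1) / (α+1))
            * ENNReal.ofReal x) * ∫⁻ z in Ioo (0:ℝ) x, w z := by ring
      _ = ENNReal.ofReal (1/(α+1)) * ENNReal.ofReal (x ^ (-α-2))
            * ∫⁻ z in Ioo (0:ℝ) x, w z := by
          congr 1
          rw [← ENNReal.ofReal_pow (Real.rpow_nonneg hx0.le _),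
            ← ENNReal.ofReal_mul (by positivity), ← ENNReal.ofReal_mul (by positivity),
            ← ENNReal.ofReal_mul (by positivity)]
          congr 1
          rw [← Real.rpow_natCast (x ^ (-α-2)) 2, ← Real.rpow_mul hx0.le]
          rw [show ((x ^ ((-α-2)*(2:ℕ)) * (x ^ (α+1) / (α+1)) * x) : ℝ)
            = (x ^ ((-α-2)*(2:ℕ)) * x ^ (α+1) * x ^ (1:ℝ)) * (1/(α+1)) by rw [Real.rpow_one]; ring]
          rw [← Real.rpow_add hx0, ← Real.rpow_add hx0]
          rw [show ((-α-2)*((2:ℕ):ℝ) + (α+1) + 1 : ℝ) = -α-2 by push_cast; ring]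
          ring
      _ = ENNReal.ofReal (1/(α+1)) *
            (ENNReal.ofReal (x ^ (-α-2)) * ∫⁻ z in Ioo (0:ℝ) x, w z) := by ring
  calc ∫⁻ x in Ioo (0:ℝ) 1,
        (ENNReal.ofReal (x ^ (-α-2)) * ∫⁻ z in Ioo 0 x, ENNReal.ofReal (z ^ (α+1)) * Φ z) ^ (2:ℕ)
          * ENNReal.ofReal x
      ≤ ∫⁻ x in Ioo (0:ℝ) 1, ENNReal.ofReal (1/(α+1)) *
          (ENNReal.ofReal (x ^ (-α-2)) * ∫⁻ z in Ioo 0 x, w z) := by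
        refine lintegral_mono_ae ?_
        filter_upwards [self_mem_ae_restrict measurableSet_Ioo] with x hx
        exact pointwise x hx
    _ = ENNReal.ofReal (1/(α+1)) * ∫⁻ x in Ioo (0:ℝ) 1,
          ENNReal.ofReal (x ^ (-α-2)) * ∫⁻ z in Ioo 0 x, w z :=
        lintegral_const_mul' _ _ ENNReal.ofReal_ne_top
    _ = ENNReal.ofReal (1/(α+1)) * ∫⁻ z in Ioo (0:ℝ) 1,
          w z * ∫⁻ x in Ioo z 1, ENNReal.ofReal (x ^ (-α-2)) := by
        rw [swap2 _ w (meas_P _) hwm (fun _ => ENNReal.ofReal_ne_top) hwt]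
    _ ≤ ENNReal.ofReal (1/(α+1)) * ∫⁻ z in Ioo (0:ℝ) 1,
          w z * ENNReal.ofReal (z ^ (-α-1) / (α+1)) := by
        refine mul_le_mul_right ?_ _
        refine lintegral_mono_ae ?_
        filter_upwards [self_mem_ae_restrict measurableSet_Ioo] with z hz
        refine mul_le_mul_right ?_ _
        have h := lint_rpow_Ioo_one (-α-2) (by linarith) hz.1 hz.2.le
        rwa [show -α-2+1 = -α-1 by ring, show -(-α-1) = α+1 by ring] at h
    _ = ENNReal.ofReal ((1/(α+1))^2) * ∫⁻ z in Ioo (0:ℝ) 1, ENNReal.ofReal z * Φ z ^ (2:ℝ) := by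
        have : ∫⁻ z in Ioo (0:ℝ) 1, w z * ENNReal.ofReal (z ^ (-α-1) / (α+1))
            = ∫⁻ z in Ioo (0:ℝ) 1, ENNReal.ofReal (1/(α+1)) * (ENNReal.ofReal z * Φ z ^ (2:ℝ)) := by
          refine setLIntegral_congr_fun_ae measurableSet_Ioo (ae_of_all _ fun z hz => ?_)
          rw [hw, show ENNReal.ofReal (z ^ (α+2)) * Φ z ^ (2:ℝ) * ENNReal.ofReal (z ^ (-α-1) / (α+1))
              = (ENNReal.ofReal (z ^ (α+2)) * ENNReal.ofReal (z ^ (-α-1) / (α+1))) * Φ z ^ (2:ℝ) by ring,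
            ← ENNReal.ofReal_mul (Real.rpow_nonneg hz.1.le _),
            show z ^ (α+2) * (z ^ (-α-1) / (α+1)) = z ^ (α+2) * z ^ (-α-1) * (1/(α+1)) by ring,
            ← Real.rpow_add hz.1, show α+2 + (-α-1) = (1:ℝ) by ring, Real.rpow_one,
            ENNReal.ofReal_mul hz.1.le]
          ring
        rw [this, lintegral_const_mul' _ _ ENNReal.ofReal_ne_top, ← mul_assoc,
          ← ENNReal.ofReal_mul (by positivity), sq]

-- Cauchy–Schwarz step for S2
lemma claim3 (α : ℝ) (hα : 1 < α) (Φ : ℝ → ℝ≥0∞) (hΦ : Measurable Φ)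
    (hΦt : ∀ z, Φ z ≠ ⊤) :
    ∫⁻ x in Ioo (0:ℝ) 1,
        (ENNReal.ofReal (x ^ (α-2)) * ∫⁻ z in Ico x 1, ENNReal.ofReal (z ^ (1-α)) * Φ z) ^ (2:ℕ)
          * ENNReal.ofReal x
      ≤ ENNReal.ofReal ((1/(α-1))^2) * ∫⁻ z in Ioo (0:ℝ) 1, ENNReal.ofReal z * Φ z ^ (2:ℝ) := by
  have hα1 : (0:ℝ) < α - 1 := by linarith
  set w : ℝ → ℝ≥0∞ := fun z => ENNReal.ofReal (z ^ (2-α)) * Φ z ^ (2:ℝ) with hw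
  have hwm : Measurable w := (meas_P _).mul (hΦ.pow_const _)
  have hwt : ∀ z, w z ≠ ⊤ :=
    fun z => ENNReal.mul_ne_top ENNReal.ofReal_ne_top
      (ENNReal.rpow_lt_top_of_nonneg (by norm_num) (hΦt z)).ne
  have pointwise : ∀ x ∈ Ioo (0:ℝ) 1,
      (ENNReal.ofReal (x ^ (α-2)) * ∫⁻ z in Ico x 1, ENNReal.ofReal (z ^ (1-α)) * Φ z) ^ (2:ℕ)
        * ENNReal.ofReal x
      ≤ ENNReal.ofReal (1/(α-1)) *
          (ENNReal.ofReal (x ^ (α-2)) * ∫⁻ z in Ico x 1, w z) := by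
    intro x hx
    have hx0 : (0:ℝ) < x := hx.1
    set f : ℝ → ℝ≥0∞ := fun z => ENNReal.ofReal (z ^ (-α/2)) with hf
    set g : ℝ → ℝ≥0∞ := fun z => ENNReal.ofReal (z ^ ((2-α)/2)) * Φ z with hg
    have hfg : ∫⁻ z in Ico x (1:ℝ), ENNReal.ofReal (z ^ (1-α)) * Φ z
        = ∫⁻ z in Ico x (1:ℝ), (f * g) z := by
      refine setLIntegral_congr_fun_ae measurableSet_Ico (ae_of_all _ fun z hz => ?_)
      have hz0 : (0:ℝ) < z := lt_of_lt_of_le hx0 hz.1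
      simp only [hf, hg, Pi.mul_apply]
      rw [← mul_assoc, ← ENNReal.ofReal_mul (Real.rpow_nonneg hz0.le _),
        ← Real.rpow_add hz0, show -α/2 + (2-α)/2 = 1 - α by ring]
    have CS := ENNReal.lintegral_mul_le_Lp_mul_Lq (volume.restrict (Ico x (1:ℝ))) conj22
      ((meas_P (-α/2)).aemeasurable) (((meas_P ((2-α)/2)).mul hΦ).aemeasurable)
    have hf2 : ∫⁻ z in Ico x (1:ℝ), f z ^ (2:ℝ) ≤ ENNReal.ofReal (x ^ (1-α) / (α-1)) := by
      have e : ∫⁻ z in Ico x (1:ℝ), f z ^ (2:ℝ) = ∫⁻ z in Ico x (1:ℝ), ENNReal.ofReal (z ^ (-α)) := by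
        refine setLIntegral_congr_fun_ae measurableSet_Ico (ae_of_all _ fun z hz => ?_)
        have hz0 : (0:ℝ) < z := lt_of_lt_of_le hx0 hz.1
        rw [hf, ENNReal.ofReal_rpow_of_nonneg (Real.rpow_nonneg hz0.le _) (by norm_num),
          ← Real.rpow_mul hz0.le, show -α/2 * 2 = -α by ring]
      rw [e, ← Measure.restrict_congr_set Ioo_ae_eq_Ico]
      have h := lint_rpow_Ioo_one (-α) (by linarith) hx0 hx.2.le
      rwa [show -α+1 = 1-α by ring, show -(1-α) = α-1 by ring] at h
    have hg2 : ∫⁻ z in Ico x (1:ℝ), g z ^ (2:ℝ) = ∫⁻ z in Ico x (1:ℝ), w z := by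
      refine setLIntegral_congr_fun_ae measurableSet_Ico (ae_of_all _ fun z hz => ?_)
      have hz0 : (0:ℝ) < z := lt_of_lt_of_le hx0 hz.1
      rw [hg, hw, ENNReal.mul_rpow_of_nonneg _ _ (by norm_num : (0:ℝ) ≤ 2),
        ENNReal.ofReal_rpow_of_nonneg (Real.rpow_nonneg hz0.le _) (by norm_num),
        ← Real.rpow_mul hz0.le, show (2-α)/2 * 2 = 2 - α by ring]
    rw [hfg]
    have sqI : (∫⁻ z in Ico x (1:ℝ), (f * g) z) ^ (2:ℕ)
        ≤ ENNReal.ofReal (x ^ (1-α) / (α-1)) * ∫⁻ z in Ico x (1:ℝ), w z := by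
      calc (∫⁻ z in Ico x (1:ℝ), (f * g) z) ^ (2:ℕ)
          ≤ ((∫⁻ z in Ico x (1:ℝ), f z ^ (2:ℝ)) ^ (1/(2:ℝ)) *
             (∫⁻ z in Ico x (1:ℝ), g z ^ (2:ℝ)) ^ (1/(2:ℝ))) ^ (2:ℕ) := pow_le_pow_left' CS 2
        _ = (∫⁻ z in Ico x (1:ℝ), f z ^ (2:ℝ)) * ∫⁻ z in Ico x (1:ℝ), g z ^ (2:ℝ) := by
            rw [mul_pow, ← ENNReal.rpow_natCast (_ ^ (1/(2:ℝ))) 2,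
              ← ENNReal.rpow_natCast (_ ^ (1/(2:ℝ))) 2, ← ENNReal.rpow_mul, ← ENNReal.rpow_mul]
            norm_num
        _ ≤ ENNReal.ofReal (x ^ (1-α) / (α-1)) * ∫⁻ z in Ico x (1:ℝ), w z := by
            rw [hg2]; exact mul_le_mul_left hf2 _
    calc (ENNReal.ofReal (x ^ (α-2)) * ∫⁻ z in Ico x (1:ℝ), (f*g) z) ^ (2:ℕ)
          * ENNReal.ofReal x
        = ENNReal.ofReal (x ^ (α-2)) ^ (2:ℕ) * ((∫⁻ z in Ico x (1:ℝ), (f*g) z) ^ (2:ℕ))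
          * ENNReal.ofReal x := by ring
      _ ≤ ENNReal.ofReal (x ^ (α-2)) ^ (2:ℕ) *
            (ENNReal.ofReal (x ^ (1-α) / (α-1)) * ∫⁻ z in Ico x (1:ℝ), w z)
          * ENNReal.ofReal x := by gcongr
      _ = (ENNReal.ofReal (x ^ (α-2)) ^ (2:ℕ) * ENNReal.ofReal (x ^ (1-α) / (α-1))
            * ENNReal.ofReal x) * ∫⁻ z in Ico x (1:ℝ), w z := by ring
      _ = ENNReal.ofReal (1/(α-1)) * ENNReal.ofReal (x ^ (α-2))
            * ∫⁻ z in Ico x (1:ℝ), w z := by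
          congr 1
          rw [← ENNReal.ofReal_pow (Real.rpow_nonneg hx0.le _),
            ← ENNReal.ofReal_mul (by positivity), ← ENNReal.ofReal_mul (by positivity),
            ← ENNReal.ofReal_mul (by positivity)]
          congr 1
          rw [← Real.rpow_natCast (x ^ (α-2)) 2, ← Real.rpow_mul hx0.le]
          rw [show ((x ^ ((α-2)*(2:ℕ)) * (x ^ (1-α) / (α-1)) * x) : ℝ)
            = (x ^ ((α-2)*(2:ℕ)) * x ^ (1-α) * x ^ (1:ℝ)) * (1/(α-1)) by rw [Real.rpow_one]; ring]
          rw [← Real.rpow_add hx0, ← Real.rpow_add hx0]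
          rw [show ((α-2)*((2:ℕ):ℝ) + (1-α) + 1 : ℝ) = α-2 by push_cast; ring]
          ring
      _ = ENNReal.ofReal (1/(α-1)) *
            (ENNReal.ofReal (x ^ (α-2)) * ∫⁻ z in Ico x (1:ℝ), w z) := by ring
  calc ∫⁻ x in Ioo (0:ℝ) 1,
        (ENNReal.ofReal (x ^ (α-2)) * ∫⁻ z in Ico x 1, ENNReal.ofReal (z ^ (1-α)) * Φ z) ^ (2:ℕ)
          * ENNReal.ofReal x
      ≤ ∫⁻ x in Ioo (0:ℝ) 1, ENNReal.ofReal (1/(α-1)) *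
          (ENNReal.ofReal (x ^ (α-2)) * ∫⁻ z in Ico x 1, w z) := by
        refine lintegral_mono_ae ?_
        filter_upwards [self_mem_ae_restrict measurableSet_Ioo] with x hx
        exact pointwise x hx
    _ = ENNReal.ofReal (1/(α-1)) * ∫⁻ x in Ioo (0:ℝ) 1,
          ENNReal.ofReal (x ^ (α-2)) * ∫⁻ z in Ico x 1, w z :=
        lintegral_const_mul' _ _ ENNReal.ofReal_ne_top
    _ = ENNReal.ofReal (1/(α-1)) * ∫⁻ z in Ioo (0:ℝ) 1,
          w z * ∫⁻ x in Ioc 0 z, ENNReal.ofReal (x ^ (α-2)) := by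
        rw [swap3 _ w (meas_P _) hwm (fun _ => ENNReal.ofReal_ne_top) hwt]
    _ ≤ ENNReal.ofReal (1/(α-1)) * ∫⁻ z in Ioo (0:ℝ) 1,
          w z * ENNReal.ofReal (z ^ (α-1) / (α-1)) := by
        refine mul_le_mul_right ?_ _
        refine lintegral_mono_ae ?_
        filter_upwards [self_mem_ae_restrict measurableSet_Ioo] with z hz
        refine mul_le_mul_right ?_ _
        rw [← Measure.restrict_congr_set Ioo_ae_eq_Ioc]
        have h := lint_rpow_Ioo (α-2) (by linarith) z hz.1.le
        rw [show α-2+1 = α-1 by ring] at h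
        exact h.le
    _ = ENNReal.ofReal ((1/(α-1))^2) * ∫⁻ z in Ioo (0:ℝ) 1, ENNReal.ofReal z * Φ z ^ (2:ℝ) := by
        have : ∫⁻ z in Ioo (0:ℝ) 1, w z * ENNReal.ofReal (z ^ (α-1) / (α-1))
            = ∫⁻ z in Ioo (0:ℝ) 1, ENNReal.ofReal (1/(α-1)) * (ENNReal.ofReal z * Φ z ^ (2:ℝ)) := by
          refine setLIntegral_congr_fun_ae measurableSet_Ioo (ae_of_all _ fun z hz => ?_)
          rw [hw, show ENNReal.ofReal (z ^ (2-α)) * Φ z ^ (2:ℝ) * ENNReal.ofReal (z ^ (α-1) / (α-1))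
              = (ENNReal.ofReal (z ^ (2-α)) * ENNReal.ofReal (z ^ (α-1) / (α-1))) * Φ z ^ (2:ℝ) by ring,
            ← ENNReal.ofReal_mul (Real.rpow_nonneg hz.1.le _),
            show z ^ (2-α) * (z ^ (α-1) / (α-1)) = z ^ (2-α) * z ^ (α-1) * (1/(α-1)) by ring,
            ← Real.rpow_add hz.1, show 2-α + (α-1) = (1:ℝ) by ring, Real.rpow_one,
            ENNReal.ofReal_mul hz.1.le]
          ring
        rw [this, lintegral_const_mul' _ _ ENNReal.ofReal_ne_top, ← mul_assoc,
          ← ENNReal.ofReal_mul (by positivity), sq]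

lemma claimK (α : ℝ) (hα : 1 < α) (Φ : ℝ → ℝ≥0∞) (hΦ : Measurable Φ)
    (hΦt : ∀ z, Φ z ≠ ⊤) {x : ℝ} (hx : x ∈ Ioo (0:ℝ) 1) :
    ENNReal.ofReal (x ^ (-α-2)) *
        ∫⁻ y in Ioo (0:ℝ) x, ENNReal.ofReal (y ^ (2*α-1)) *
          ∫⁻ z in Ioo y 1, ENNReal.ofReal (z ^ (1-α)) * Φ z
      = ENNReal.ofReal (1/(2*α)) *
        ((ENNReal.ofReal (x ^ (-α-2)) * ∫⁻ z in Ioo 0 x, ENNReal.ofReal (z ^ (α+1)) * Φ z)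
          + ENNReal.ofReal (x ^ (α-2)) * ∫⁻ z in Ico x 1, ENNReal.ofReal (z ^ (1-α)) * Φ z) := by
  have hx0 : (0:ℝ) < x := hx.1
  have h2a : (0:ℝ) < 2*α := by linarith
  set m : ℝ → ℝ≥0∞ := fun z => ENNReal.ofReal (z ^ (1-α)) * Φ z with hm
  have hmm : Measurable m := (meas_P _).mul hΦ
  have hmt : ∀ z, m z ≠ ⊤ := fun z =>
    ENNReal.mul_ne_top ENNReal.ofReal_ne_top (hΦt z)
  rw [swap1 hx (fun y => ENNReal.ofReal (y ^ (2*α-1))) m (meas_P _) hmm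
    (fun _ => ENNReal.ofReal_ne_top) hmt]
  have hdisj : Disjoint (Ioo (0:ℝ) x) (Ico x 1) := by
    rw [Set.disjoint_left]
    rintro z ⟨-, h2⟩ ⟨h3, -⟩
    exact absurd h3 (not_le.mpr h2)
  rw [show Ioo (0:ℝ) 1 = Ioo 0 x ∪ Ico x 1 from (Ioo_union_Ico_eq_Ioo hx.1 hx.2.le).symm,
    lintegral_union measurableSet_Ico hdisj]
  have part1 : ∫⁻ z in Ioo (0:ℝ) x, m z * ∫⁻ y in Ioo 0 (min x z), ENNReal.ofReal (y ^ (2*α-1))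
      = ENNReal.ofReal (1/(2*α)) * ∫⁻ z in Ioo (0:ℝ) x, ENNReal.ofReal (z ^ (α+1)) * Φ z := by
    rw [← lintegral_const_mul' _ _ (ENNReal.ofReal_ne_top : ENNReal.ofReal (1/(2*α)) ≠ ⊤)]
    refine setLIntegral_congr_fun_ae measurableSet_Ioo (ae_of_all _ fun z hz => ?_)
    rw [min_eq_right hz.2.le]
    have h := lint_rpow_Ioo (2*α-1) (by linarith) z hz.1.le
    rw [show 2*α-1+1 = 2*α by ring] at h
    rw [h, hm]
    rw [show ENNReal.ofReal (z ^ (1-α)) * Φ z * ENNReal.ofReal (z ^ (2*α) / (2*α))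
        = (ENNReal.ofReal (z ^ (1-α)) * ENNReal.ofReal (z ^ (2*α) / (2*α))) * Φ z by ring,
      ← ENNReal.ofReal_mul (Real.rpow_nonneg hz.1.le _),
      show z ^ (1-α) * (z ^ (2*α) / (2*α)) = z ^ (1-α) * z ^ (2*α) * (1/(2*α)) by ring,
      ← Real.rpow_add hz.1, show 1-α + 2*α = α+1 by ring,
      ENNReal.ofReal_mul (Real.rpow_nonneg hz.1.le _)]
    ring
  have part2 : ∫⁻ z in Ico x (1:ℝ), m z * ∫⁻ y in Ioo 0 (min x z), ENNReal.ofReal (y ^ (2*α-1))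
      = ENNReal.ofReal (x ^ (2*α) / (2*α)) * ∫⁻ z in Ico x (1:ℝ), m z := by
    rw [← lintegral_const_mul' _ _ (ENNReal.ofReal_ne_top : ENNReal.ofReal (x ^ (2*α) / (2*α)) ≠ ⊤)]
    refine setLIntegral_congr_fun_ae measurableSet_Ico (ae_of_all _ fun z hz => ?_)
    rw [min_eq_left hz.1]
    have h := lint_rpow_Ioo (2*α-1) (by linarith) x hx0.le
    rw [show 2*α-1+1 = 2*α by ring] at h
    rw [h]
    ring
  rw [part1, part2]
  have hPR : ENNReal.ofReal (x ^ (-α-2)) * ENNReal.ofReal (x ^ (2*α) / (2*α))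
      = ENNReal.ofReal (1/(2*α)) * ENNReal.ofReal (x ^ (α-2)) := by
    rw [← ENNReal.ofReal_mul (Real.rpow_nonneg hx0.le _), ← ENNReal.ofReal_mul (by positivity)]
    congr 1
    rw [show x ^ (-α-2) * (x ^ (2*α) / (2*α)) = x ^ (-α-2) * x ^ (2*α) * (1/(2*α)) by ring,
      ← Real.rpow_add hx0, show -α-2 + 2*α = α-2 by ring]
    ring
  calc ENNReal.ofReal (x ^ (-α-2)) *
        ((ENNReal.ofReal (1/(2*α)) * ∫⁻ z in Ioo (0:ℝ) x, ENNReal.ofReal (z ^ (α+1)) * Φ z)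
          + ENNReal.ofReal (x ^ (2*α) / (2*α)) * ∫⁻ z in Ico x (1:ℝ), m z)
      = ENNReal.ofReal (1/(2*α)) *
          (ENNReal.ofReal (x ^ (-α-2)) * ∫⁻ z in Ioo (0:ℝ) x, ENNReal.ofReal (z ^ (α+1)) * Φ z)
        + (ENNReal.ofReal (x ^ (-α-2)) * ENNReal.ofReal (x ^ (2*α) / (2*α)))
          * ∫⁻ z in Ico x (1:ℝ), m z := by ring
    _ = ENNReal.ofReal (1/(2*α)) *
        ((ENNReal.ofReal (x ^ (-α-2)) * ∫⁻ z in Ioo 0 x, ENNReal.ofReal (z ^ (α+1)) * Φ z)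
          + ENNReal.ofReal (x ^ (α-2)) * ∫⁻ z in Ico x 1, ENNReal.ofReal (z ^ (1-α)) * Φ z) := by
        rw [hPR]; ring

/-- For `α > 1` there is `C = C(α) > 0` with `‖x^{−2} A_α(A_α^* φ)‖_{L²_x} ≤ C ‖φ‖_{L²_x}`
for every `φ ∈ L²_x`. -/
theorem AAstar_bound (α : ℝ) (hα : 1 < α) :
    ∃ C : ℝ, 0 < C ∧ ∀ φ : ℝ → ℝ, Measurable φ → eL2x φ < ⊤ →
      eL2x (fun x => Aa α (Astar α φ) x / x ^ 2) ≤ ENNReal.ofReal C * eL2x φ := by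
  have hα0 : (0:ℝ) < α := by linarith
  set D : ℝ := 3 * (1/(2*α))^2 * ((1/(α+1))^2 + (1/(α-1))^2) with hDdef
  have hα1 : (0:ℝ) < α - 1 := by linarith
  have hD : 0 < D := by
    have h1 : (0:ℝ) < (1/(2*α))^2 := by positivity
    have h2 : (0:ℝ) < (1/(α-1))^2 := by positivity
    have h3 : (0:ℝ) ≤ (1/(α+1))^2 := sq_nonneg _
    nlinarith
  refine ⟨D ^ ((1:ℝ)/2), Real.rpow_pos_of_pos hD _, fun φ hφ _ => ?_⟩
  set Φ : ℝ → ℝ≥0∞ := fun z => ENNReal.ofReal |φ z| with hΦdef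
  have hΦ : Measurable Φ := hφ.abs.ennreal_ofReal
  have hΦt : ∀ z, Φ z ≠ ⊤ := fun z => ENNReal.ofReal_ne_top
  set N2 : ℝ≥0∞ := ∫⁻ z in Ioo (0:ℝ) 1, ENNReal.ofReal z * Φ z ^ (2:ℝ) with hN2
  have hN : eL2x φ = N2 ^ ((1:ℝ)/2) := by
    rw [eL2x, hN2]
    congr 1
    refine setLIntegral_congr_fun_ae measurableSet_Ioo (ae_of_all _ fun z hz => ?_)
    calc ENNReal.ofReal (φ z ^ 2 * z)
        = ENNReal.ofReal (φ z ^ 2) * ENNReal.ofReal z :=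
          ENNReal.ofReal_mul (sq_nonneg _)
      _ = ENNReal.ofReal z * Φ z ^ (2:ℝ) := by
          rw [mul_comm]
          congr 1
          rw [hΦdef, ENNReal.ofReal_rpow_of_nonneg (abs_nonneg _) (by norm_num)]
          congr 1
          rw [show (2:ℝ) = ((2:ℕ):ℝ) by norm_num, Real.rpow_natCast, sq_abs]
  -- Notation for the two pieces
  set S1 : ℝ → ℝ≥0∞ := fun x =>
    ENNReal.ofReal (x ^ (-α-2)) * ∫⁻ z in Ioo 0 x, ENNReal.ofReal (z ^ (α+1)) * Φ z with hS1
  set S2 : ℝ → ℝ≥0∞ := fun x =>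
    ENNReal.ofReal (x ^ (α-2)) * ∫⁻ z in Ico x 1, ENNReal.ofReal (z ^ (1-α)) * Φ z with hS2
  have hS1m : Measurable S1 := by
    apply (meas_P _).mul
    exact Monotone.measurable (fun a b hab => lintegral_mono_set (Ioo_subset_Ioo le_rfl hab))
  have hS2m : Measurable S2 := by
    apply (meas_P _).mul
    exact Antitone.measurable (fun a b hab => lintegral_mono_set (Ico_subset_Ico hab le_rfl))
  have key : ∀ x ∈ Ioo (0:ℝ) 1,
      ENNReal.ofReal ((Aa α (Astar α φ) x / x ^ 2) ^ 2 * x)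
        ≤ ENNReal.ofReal (3 * (1/(2*α))^2) *
            (S1 x ^ (2:ℕ) * ENNReal.ofReal x + S2 x ^ (2:ℕ) * ENNReal.ofReal x) := by
    intro x hx
    have hb := step0 α hα φ hx
    have hk := claimK α hα Φ hΦ hΦt hx
    calc ENNReal.ofReal ((Aa α (Astar α φ) x / x ^ 2) ^ 2 * x)
        = ENNReal.ofReal |Aa α (Astar α φ) x / x ^ 2| ^ (2:ℕ) * ENNReal.ofReal x := by
          rw [ENNReal.ofReal_mul (sq_nonneg _), ← ENNReal.ofReal_pow (abs_nonneg _), sq_abs]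
      _ ≤ (ENNReal.ofReal (1/(2*α)) * (S1 x + S2 x)) ^ (2:ℕ) * ENNReal.ofReal x := by
          refine mul_le_mul_left (pow_le_pow_left' ?_ 2) _
          rw [hS1, hS2]
          exact le_of_le_of_eq hb hk
      _ = ENNReal.ofReal (1/(2*α)) ^ (2:ℕ) * ((S1 x + S2 x) ^ (2:ℕ)) * ENNReal.ofReal x := by
          rw [mul_pow]
      _ ≤ ENNReal.ofReal (1/(2*α)) ^ (2:ℕ) * (3 * (S1 x ^ (2:ℕ) + S2 x ^ (2:ℕ)))
            * ENNReal.ofReal x := by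
          refine mul_le_mul_left (mul_le_mul_right (sq3 _ _) _) _
      _ = ENNReal.ofReal (3 * (1/(2*α))^2) *
            (S1 x ^ (2:ℕ) * ENNReal.ofReal x + S2 x ^ (2:ℕ) * ENNReal.ofReal x) := by
          rw [ENNReal.ofReal_mul (by norm_num), ← ENNReal.ofReal_pow (by positivity),
            show ENNReal.ofReal 3 = 3 from by norm_num]
          ring
  have main : ∫⁻ x in Ioo (0:ℝ) 1, ENNReal.ofReal ((Aa α (Astar α φ) x / x ^ 2) ^ 2 * x)
      ≤ ENNReal.ofReal D * N2 := by
    calc ∫⁻ x in Ioo (0:ℝ) 1, ENNReal.ofReal ((Aa α (Astar α φ) x / x ^ 2) ^ 2 * x)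
        ≤ ∫⁻ x in Ioo (0:ℝ) 1, ENNReal.ofReal (3 * (1/(2*α))^2) *
            (S1 x ^ (2:ℕ) * ENNReal.ofReal x + S2 x ^ (2:ℕ) * ENNReal.ofReal x) := by
          refine lintegral_mono_ae ?_
          filter_upwards [self_mem_ae_restrict measurableSet_Ioo] with x hx
          exact key x hx
      _ = ENNReal.ofReal (3 * (1/(2*α))^2) *
            ((∫⁻ x in Ioo (0:ℝ) 1, S1 x ^ (2:ℕ) * ENNReal.ofReal x)
              + ∫⁻ x in Ioo (0:ℝ) 1, S2 x ^ (2:ℕ) * ENNReal.ofReal x) := by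
          rw [lintegral_const_mul' _ _ ENNReal.ofReal_ne_top,
            lintegral_add_left (f := fun x => S1 x ^ (2:ℕ) * ENNReal.ofReal x)
              ((hS1m.pow_const 2).mul ENNReal.measurable_ofReal)]
      _ ≤ ENNReal.ofReal (3 * (1/(2*α))^2) *
            (ENNReal.ofReal ((1/(α+1))^2) * N2 + ENNReal.ofReal ((1/(α-1))^2) * N2) := by
          refine mul_le_mul_right (add_le_add ?_ ?_) _
          · exact claim2 α hα Φ hΦ hΦt
          · exact claim3 α hα Φ hΦ hΦt
      _ = ENNReal.ofReal D * N2 := by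
          rw [← add_mul, ← ENNReal.ofReal_add (sq_nonneg _) (sq_nonneg _), ← mul_assoc,
            ← ENNReal.ofReal_mul (by positivity), hDdef]
  calc eL2x (fun x => Aa α (Astar α φ) x / x ^ 2)
      = (∫⁻ x in Ioo (0:ℝ) 1,
          ENNReal.ofReal ((Aa α (Astar α φ) x / x ^ 2) ^ 2 * x)) ^ ((1:ℝ)/2) := by
        rw [eL2x]
    _ ≤ (ENNReal.ofReal D * N2) ^ ((1:ℝ)/2) := ENNReal.rpow_le_rpow main (by norm_num)
    _ = ENNReal.ofReal D ^ ((1:ℝ)/2) * N2 ^ ((1:ℝ)/2) :=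
        ENNReal.mul_rpow_of_nonneg _ _ (by norm_num)
    _ = ENNReal.ofReal (D ^ ((1:ℝ)/2)) * eL2x φ := by
        rw [hN, ENNReal.ofReal_rpow_of_pos hD]
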